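/- Let k ≥ 2, let A_k(n) be the number of length-n words over a k-letter alphabet having no nontrivial palindromic prefix, and set T_k(n) = A_k(n)·k^{−n}. Then for all n ≥ 1, T_k(2n) = 2 − (k+1)·∑_{i=1}^{n} T_k(i)·k^{−i}. -/

import Mathlib

/-- A word has a nontrivial palindromic prefix if some prefix of length `≥ 2` is a
palindrome. -/
def HasNontrivPalPrefix {α : Type*} (w : List α) : Prop :=
  ∃ p : List α, 2 ≤ p.length ∧ p <+: w ∧ p.reverse = p

/-- `A k n`: the number of length-`n` words over a `k`-letter alphabet having no
nontrivial palindromic prefix. -/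
noncomputable def A (k n : ℕ) : ℕ :=
  {w : List (Fin k) | w.length = n ∧ ¬ HasNontrivPalPrefix w}.ncard

/-- `T k n = A k n / kⁿ`. -/
noncomputable def T (k n : ℕ) : ℝ := (A k n : ℝ) / (k : ℝ) ^ n

theorem pal_get {α : Type*} {u : List α} (h : u.reverse = u) {i : ℕ} (hi : i < u.length) :
    u[i] = u[u.length - 1 - i]'(by omega) := by
  have h1 : u.reverse[i]'(by simpa) = u[i] := List.getElem_of_eq h _
  rw [← h1, List.getElem_reverse]

theorem pal_of_get {α : Type*} {u : List α}
    (h : ∀ i (hi : i < u.length), u[i] = u[u.length - 1 - i]'(by omega)) :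
    u.reverse = u := by
  apply List.ext_getElem (by simp)
  intro i h1 h2
  rw [List.getElem_reverse]
  exact (h _ _).symm

theorem getElem_congr_idx' {α : Type*} {u : List α} {i j : ℕ} (hij : i = j) (hi : i < u.length) :
    u[i] = u[j]'(hij ▸ hi) := by subst hij; rfl

theorem pal_step {α : Type*} {w p : List α} (hw : w.reverse = w) (hp : p <+: w)
    (hpal : p.reverse = p) (hL : w.length ≤ 2 * p.length) :
    (w.take (2 * p.length - w.length)).reverse = w.take (2 * p.length - w.length) := by
  have hl : p.length ≤ w.length := hp.length_le
  set L := w.length with hLdef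
  set l := p.length with hldef
  set t := 2 * l - L with htdef
  have ht : t ≤ L := by omega
  have key : ∀ j (hj : j < t), w[j]'(by omega) = w[L - l + j]'(by omega) := by
    intro j hj
    calc w[j]'(by omega) = p[j]'(by omega) := (hp.getElem (by omega)).symm
    _ = p[l - 1 - j]'(by omega) := pal_get hpal (by omega)
    _ = w[l - 1 - j]'(by omega) := hp.getElem (by omega)
    _ = w[L - 1 - (l - 1 - j)]'(by omega) := pal_get hw (by omega)
    _ = w[L - l + j]'(by omega) := getElem_congr_idx' (by omega) _
  apply pal_of_get
  intro i hi
  simp only [List.getElem_take, List.length_take, Nat.min_eq_left (show t ≤ w.length from ht)] at hi ⊢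
  have hit : i < t := hi
  calc w[i]'(by omega) = w[L - l + i]'(by omega) := key i hit
    _ = p[L - l + i]'(by omega) := (hp.getElem (by omega)).symm
    _ = p[l - 1 - (L - l + i)]'(by omega) := pal_get hpal (by omega)
    _ = p[t - 1 - i]'(by omega) := getElem_congr_idx' (by omega) _
    _ = w[t - 1 - i]'(by omega) := hp.getElem (by omega)

theorem pal_descent {α : Type*} {w : List α} (hw : w.reverse = w) :
    ∀ l (p : List α), p.length = l → p <+: w → p.reverse = p → 2 ≤ p.length →
      p.length < w.length →
      ∃ q : List α, q <+: w ∧ q.reverse = q ∧ 2 ≤ q.length ∧ 2 * q.length ≤ w.length + 1 := by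
  intro l
  induction l using Nat.strong_induction_on with
  | _ l ih =>
    intro p hpl hp hpal h2 hlt
    by_cases hsmall : 2 * p.length ≤ w.length + 1
    · exact ⟨p, hp, hpal, h2, hsmall⟩
    · push_neg at hsmall
      have hL : w.length ≤ 2 * p.length := by omega
      refine ih (2 * p.length - w.length) (by omega) (w.take (2 * p.length - w.length))
        (by simp only [List.length_take]; omega) (List.take_prefix _ _)
        (pal_step hw hp hpal hL) (by simp only [List.length_take]; omega)
        (by simp only [List.length_take]; omega)

/-! ### Counting -/

def Sset (k n : ℕ) : Set (List (Fin k)) := {w | w.length = n ∧ ¬ HasNontrivPalPrefix w}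
def Eset (k L : ℕ) : Set (List (Fin k)) := {w | w.length = L ∧ ¬ HasNontrivPalPrefix w.dropLast}
def Pset (k L : ℕ) : Set (List (Fin k)) :=
  {w | w.length = L ∧ ¬ HasNontrivPalPrefix w.dropLast ∧ w.reverse = w}

lemma A_eq (k n : ℕ) : A k n = (Sset k n).ncard := rfl

lemma Sfin (k n : ℕ) : (Sset k n).Finite :=
  (List.finite_length_eq (Fin k) n).subset (fun _ hw => hw.1)

lemma Efin (k L : ℕ) : (Eset k L).Finite :=
  (List.finite_length_eq (Fin k) L).subset (fun _ hw => hw.1)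

lemma prefix_dropLast_iff {α : Type*} {p w : List α} :
    p <+: w.dropLast ↔ p <+: w ∧ p.length ≤ w.length - 1 := by
  rw [List.dropLast_eq_take, List.prefix_take_iff]

lemma S_eq (k L : ℕ) (hL : 2 ≤ L) : Sset k L = Eset k L \ Pset k L := by
  ext w
  simp only [Sset, Eset, Pset, Set.mem_diff, Set.mem_setOf_eq]
  constructor
  · rintro ⟨hlen, hg⟩
    refine ⟨⟨hlen, ?_⟩, ?_⟩
    · rintro ⟨p, h2, hp, hpal⟩
      exact hg ⟨p, h2, hp.trans (List.dropLast_prefix w), hpal⟩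
    · rintro ⟨-, -, h⟩
      exact hg ⟨w, by omega, List.prefix_refl w, h⟩
  · rintro ⟨⟨hlen, hgd⟩, hnp⟩
    refine ⟨hlen, ?_⟩
    rintro ⟨p, h2, hp, hpal⟩
    by_cases hcase : p.length = L
    · have hpw : p = w := hp.eq_of_length (by omega)
      exact hnp ⟨hlen, hgd, hpw ▸ hpal⟩
    · exact hgd ⟨p, h2, prefix_dropLast_iff.2 ⟨hp, by have := hp.length_le; omega⟩, hpal⟩

lemma E_card (k L : ℕ) (hL : 1 ≤ L) : (Eset k L).ncard = k * A k (L - 1) := by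
  have himg : Eset k L =
      (fun uc : List (Fin k) × Fin k => uc.1 ++ [uc.2]) '' ((Sset k (L-1)) ×ˢ Set.univ) := by
    ext w
    simp only [Eset, Sset, Set.mem_image, Set.mem_prod, Set.mem_univ, and_true,
      Set.mem_setOf_eq]
    constructor
    · rintro ⟨hlen, hg⟩
      have hne : w ≠ [] := by intro h; rw [h] at hlen; simp at hlen; omega
      exact ⟨(w.dropLast, w.getLast hne), ⟨by simp [hlen], hg⟩,
        List.dropLast_concat_getLast hne⟩
    · rintro ⟨⟨u, c⟩, ⟨hu, hg⟩, rfl⟩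
      refine ⟨by simp [hu]; omega, by rwa [List.dropLast_concat]⟩
  rw [himg, Set.ncard_image_of_injOn, ← Nat.card_coe_set_eq,
    Nat.card_congr (Equiv.Set.prod _ _), Nat.card_prod, Nat.card_coe_set_eq,
    Nat.card_coe_set_eq, Set.ncard_univ, Nat.card_eq_fintype_card, Fintype.card_fin,
    ← A_eq, mul_comm]
  intro x _ y _ hxy
  have hxy' : x.1 ++ [x.2] = y.1 ++ [y.2] := hxy
  have h1 : x.1 = y.1 := by
    have := congrArg List.dropLast hxy'; simpa [List.dropLast_concat] using this
  have h2 : x.2 = y.2 := by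
    rw [h1] at hxy'
    have := List.append_cancel_left hxy'
    simpa using this
  exact Prod.ext h1 h2

lemma P_even_card (k m : ℕ) (hm : 1 ≤ m) : (Pset k (2*m)).ncard = A k m := by
  have himg : Pset k (2*m) = (fun u : List (Fin k) => u ++ u.reverse) '' (Sset k m) := by
    ext w
    simp only [Pset, Sset, Set.mem_image, Set.mem_setOf_eq]
    constructor
    · rintro ⟨hlen, hgd, hpal⟩
      refine ⟨w.take m, ⟨by simp only [List.length_take, hlen]; omega, ?_⟩, ?_⟩
      · rintro ⟨p, h2, hp, hppal⟩
        exact hgd ⟨p, h2, prefix_dropLast_iff.2 ⟨hp.trans (List.take_prefix _ _),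
          by have := hp.length_le; simp [hlen] at this ⊢; omega⟩, hppal⟩
      · have hdrop : (w.take m).reverse = w.drop m := by
          rw [List.reverse_take, hpal, hlen]
          congr 1
          omega
        rw [hdrop, List.take_append_drop]
    · rintro ⟨u, ⟨hu, hgu⟩, rfl⟩
      have hlen : (u ++ u.reverse).length = 2*m := by simp [hu]; ring
      have hwpal : (u ++ u.reverse).reverse = u ++ u.reverse := by simp
      refine ⟨hlen, ?_, hwpal⟩
      rintro ⟨p, h2, hp, hppal⟩
      obtain ⟨hpw, hple⟩ := prefix_dropLast_iff.1 hp
      obtain ⟨q, hq, hqpal, hq2, hqle⟩ :=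
        pal_descent hwpal p.length p rfl hpw hppal h2 (by omega)
      apply hgu
      refine ⟨q, hq2, ?_, hqpal⟩
      have hq' : q <+: (u ++ u.reverse).take m :=
        List.prefix_take_iff.2 ⟨hq, by rw [hlen] at hqle; omega⟩
      rwa [List.take_left' hu] at hq'
  rw [himg, Set.ncard_image_of_injOn, ← A_eq]
  intro x hx y hy hxy
  have h := congrArg (List.take m) hxy
  rwa [List.take_left' hx.1, List.take_left' hy.1] at h

lemma P_odd_card (k m : ℕ) (hm : 1 ≤ m) : (Pset k (2*m+1)).ncard = A k (m+1) := by
  have himg : Pset k (2*m+1) =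
      (fun v : List (Fin k) => v ++ v.dropLast.reverse) '' (Sset k (m+1)) := by
    ext w
    simp only [Pset, Sset, Set.mem_image, Set.mem_setOf_eq]
    constructor
    · rintro ⟨hlen, hgd, hpal⟩
      refine ⟨w.take (m+1), ⟨by simp only [List.length_take, hlen]; omega, ?_⟩, ?_⟩
      · rintro ⟨p, h2, hp, hppal⟩
        exact hgd ⟨p, h2, prefix_dropLast_iff.2 ⟨hp.trans (List.take_prefix _ _),
          by have := hp.length_le; simp [hlen] at this ⊢; omega⟩, hppal⟩
      · have hdl : (w.take (m+1)).dropLast = w.take m := by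
          rw [List.dropLast_eq_take, List.take_take]
          congr 1
          simp only [List.length_take, hlen]
          omega
        have hdrop : (w.take m).reverse = w.drop (m+1) := by
          rw [List.reverse_take, hpal, hlen]
          congr 1
          omega
        rw [hdl, hdrop, List.take_append_drop]
    · rintro ⟨v, ⟨hv, hgv⟩, rfl⟩
      have hne : v ≠ [] := by intro h; rw [h] at hv; simp at hv
      have hvl : v.dropLast.length = m := by simp [hv]
      have hlen : (v ++ v.dropLast.reverse).length = 2*m+1 := by
        simp [hv, hvl]; omega
      have hwpal : (v ++ v.dropLast.reverse).reverse = v ++ v.dropLast.reverse := by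
        obtain ⟨u, c, huc⟩ : ∃ u c, v = u ++ [c] :=
          ⟨v.dropLast, v.getLast hne, (List.dropLast_concat_getLast hne).symm⟩
        subst huc
        simp [List.reverse_append]
      refine ⟨hlen, ?_, hwpal⟩
      rintro ⟨p, h2, hp, hppal⟩
      obtain ⟨hpw, hple⟩ := prefix_dropLast_iff.1 hp
      obtain ⟨q, hq, hqpal, hq2, hqle⟩ :=
        pal_descent hwpal p.length p rfl hpw hppal h2 (by omega)
      apply hgv
      refine ⟨q, hq2, ?_, hqpal⟩
      have hq' : q <+: (v ++ v.dropLast.reverse).take (m+1) :=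
        List.prefix_take_iff.2 ⟨hq, by rw [hlen] at hqle; omega⟩
      rwa [List.take_left' hv] at hq'
  rw [himg, Set.ncard_image_of_injOn, ← A_eq]
  intro x hx y hy hxy
  have h := congrArg (List.take (m+1)) hxy
  rwa [List.take_left' hx.1, List.take_left' hy.1] at h

lemma A_one (k : ℕ) : A k 1 = k := by
  have himg : Sset k 1 = (fun c : Fin k => [c]) '' Set.univ := by
    ext w
    simp only [Sset, Set.mem_image, Set.mem_univ, true_and, Set.mem_setOf_eq]
    constructor
    · rintro ⟨hlen, _⟩
      obtain ⟨a, rfl⟩ := List.length_eq_one_iff.1 hlen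
      exact ⟨a, rfl⟩
    · rintro ⟨c, rfl⟩
      refine ⟨rfl, ?_⟩
      rintro ⟨p, h2, hp, _⟩
      have := hp.length_le
      simp at this
      omega
  rw [A_eq, himg, Set.ncard_image_of_injOn (fun x _ y _ h => by simpa using h),
    Set.ncard_univ, Nat.card_eq_fintype_card, Fintype.card_fin]

lemma A_rec (k L : ℕ) (hL : 2 ≤ L) : A k L + (Pset k L).ncard = k * A k (L-1) := by
  have hsub : Pset k L ⊆ Eset k L := fun w hw => ⟨hw.1, hw.2.1⟩
  have hdiff := Set.ncard_diff hsub ((Efin k L).subset hsub)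
  have hle : (Pset k L).ncard ≤ (Eset k L).ncard :=
    Set.ncard_le_ncard hsub (Efin k L)
  rw [A_eq, S_eq k L hL, hdiff, ← E_card k L (by omega)]
  omega

/-! ### Real recurrences -/

lemma A_even_real (k m : ℕ) (hm : 1 ≤ m) :
    (A k (2*m) : ℝ) = k * A k (2*m-1) - A k m := by
  have h := A_rec k (2*m) (by omega)
  rw [P_even_card k m hm] at h
  have h' : ((A k (2*m) + A k m : ℕ) : ℝ) = ((k * A k (2*m-1) : ℕ) : ℝ) := by rw [h]
  push_cast at h'
  linarith

lemma A_odd_real (k m : ℕ) (hm : 1 ≤ m) :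
    (A k (2*m+1) : ℝ) = k * A k (2*m) - A k (m+1) := by
  have h := A_rec k (2*m+1) (by omega)
  rw [P_odd_card k m hm] at h
  have h2 : A k (2*m+1) + A k (m+1) = k * A k (2*m) := by simpa using h
  have h' : ((A k (2*m+1) + A k (m+1) : ℕ) : ℝ) = ((k * A k (2*m) : ℕ) : ℝ) := by rw [h2]
  push_cast at h'
  linarith

lemma T_even (k m : ℕ) (hk : 2 ≤ k) (hm : 1 ≤ m) :
    T k (2*m) = T k (2*m-1) - T k m / (k:ℝ)^m := by
  have hkr : (k:ℝ) ≠ 0 := Nat.cast_ne_zero.2 (by omega)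
  unfold T
  rw [A_even_real k m hm, sub_div, div_div]
  congr 1
  · have p1 : (k:ℝ)^(2*m) = k * k^(2*m-1) := by
      rw [show 2*m = (2*m-1)+1 from by omega, pow_succ']
      norm_num
    rw [p1]
    exact mul_div_mul_left _ _ hkr
  · congr 1
    rw [← pow_add]
    congr 1
    omega

lemma T_odd (k m : ℕ) (hk : 2 ≤ k) (hm : 1 ≤ m) :
    T k (2*m+1) = T k (2*m) - k * (T k (m+1) / (k:ℝ)^(m+1)) := by
  have hkr : (k:ℝ) ≠ 0 := Nat.cast_ne_zero.2 (by omega)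
  unfold T
  rw [A_odd_real k m hm, sub_div]
  congr 1
  · have p1 : (k:ℝ)^(2*m+1) = k * k^(2*m) := pow_succ' _ _
    rw [p1]
    exact mul_div_mul_left _ _ hkr
  · rw [div_div]
    have p2 : (k:ℝ)^(m+1) * k^(m+1) = k^(2*m+1) * k := by
      rw [← pow_add, ← pow_succ]
      congr 1
      omega
    rw [p2, ← div_div]
    field_simp

lemma T_stepL (k m : ℕ) (hk : 2 ≤ k) (hm : 1 ≤ m) :
    T k (2*(m+1)) = T k (2*m) - ((k:ℝ)+1) * (T k (m+1) / (k:ℝ)^(m+1)) := by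
  have h1 := T_even k (m+1) hk (by omega)
  have h2 := T_odd k m hk hm
  rw [show 2*(m+1)-1 = 2*m+1 from by omega] at h1
  rw [h1, h2]
  ring

lemma T_base (k : ℕ) (hk : 2 ≤ k) :
    T k 2 = 2 - ((k:ℝ)+1) * (T k 1 / (k:ℝ)^1) := by
  have hkr : (k:ℝ) ≠ 0 := Nat.cast_ne_zero.2 (by omega)
  have h := A_even_real k 1 le_rfl
  norm_num at h
  unfold T
  rw [h, A_one]
  field_simp
  ring

/-- for `k ≥ 2` and all `n ≥ 1`,
`T_k(2n) = 2 − (k+1)·∑_{i=1}^{n} T_k(i)·k^{−i}`. -/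
theorem T_two_n (k : ℕ) (hk : 2 ≤ k) (n : ℕ) (hn : 1 ≤ n) :
    T k (2 * n) = 2 - ((k : ℝ) + 1) * ∑ i ∈ Finset.Icc 1 n, T k i / (k : ℝ) ^ i := by
  induction n, hn using Nat.le_induction with
  | base =>
    rw [Finset.Icc_self, Finset.sum_singleton]
    exact T_base k hk
  | succ n hn ih =>
    rw [Finset.sum_Icc_succ_top (by omega : 1 ≤ n+1), T_stepL k n hk hn, ih]
    ring
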